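/- Fix real numbers k > 0, θ, s with 0 < θ ≤ 1, 0 < s ≤ 1 and θ s > k. The marginal prompting effect, defined as the partial derivative of the counterfactual quality Q(θ₂, s, x*(θ₁, s)) with respect to θ₁ evaluated at θ₁ = θ₂ = θ, equals P = (k/(θ² s)) · (1 - ln(θ s / k)). -/

import Mathlib

/-- The marginal prompting effect — the derivative of the
counterfactual quality Q(θ₂, s, x*(θ₁, s)) with respect to θ₁ (acting only
through the effort argument), evaluated at θ₁ = θ₂ = θ — equals
P = (k/(θ² s)) · (1 - ln(θ s / k)). -/
theorem stmt_13 (k θ s : ℝ) (hk : 0 < k) (hθ0 : 0 < θ) (hθ1 : θ ≤ 1)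
    (hs0 : 0 < s) (hs1 : s ≤ 1) (hint : k < θ * s) :
    let Q : ℝ → ℝ → ℝ → ℝ := fun θ s x => 1 - Real.exp (-(θ * s * x))
    let xstar : ℝ → ℝ → ℝ := fun θ s => (1 / (θ * s)) * Real.log (θ * s / k)
    HasDerivAt (fun θ₁ : ℝ => Q θ s (xstar θ₁ s))
        ((k / (θ ^ 2 * s)) * (1 - Real.log (θ * s / k))) θ := by
  intro Q xstar
  have hts : (0:ℝ) < θ * s := mul_pos hθ0 hs0
  have htsne : θ * s ≠ 0 := hts.ne'
  have hkne : k ≠ 0 := hk.ne'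
  have hθne : θ ≠ 0 := hθ0.ne'
  have hl : HasDerivAt (fun x : ℝ => Real.log (x * s / k)) (1/θ) θ := by
    have h0 : HasDerivAt (fun x : ℝ => x * s / k) (s/k) θ := by
      simpa using ((hasDerivAt_id θ).mul_const s).div_const k
    have h1 := (Real.hasDerivAt_log (by positivity : θ * s / k ≠ 0)).comp θ h0
    refine h1.congr_deriv ?_
    field_simp
  have hinv : HasDerivAt (fun x : ℝ => 1 / (x * s)) (-(s / (θ*s)^2)) θ := by
    have h0 : HasDerivAt (fun x : ℝ => x * s) s θ := by
      simpa using (hasDerivAt_id θ).mul_const s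
    have h1 := (hasDerivAt_const θ (1:ℝ)).div h0 htsne
    refine h1.congr_deriv ?_
    field_simp
    ring
  have hmul := (hinv.mul hl).const_mul (θ * s)
  have hexp := hmul.neg.exp
  have hfin := hexp.const_sub 1
  have hval : Real.exp (-(θ * s * ((1 / (θ * s)) * Real.log (θ * s / k)))) = k / (θ * s) := by
    have : θ * s * ((1 / (θ * s)) * Real.log (θ * s / k)) = Real.log (θ * s / k) := by
      field_simp
    rw [this, Real.exp_neg, Real.exp_log (by positivity), inv_div]
  refine hfin.congr_deriv ?_
  simp only [Pi.neg_apply, Pi.mul_apply]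
  rw [hval]
  field_simp
  ring
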